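/- Let α_s = [2(1 − 10^{-4}/16)·exp(−(2s−1)²/(8·10^{-2})) + 2·(10^{-4}/16)·exp(−(2s−1)²/8)]·2^{s+1} for positive integers s. Then α_1 ≤ 10^{-4}, α_s/α_{s+1} ≥ e/2 for all s ≥ 1, and Σ_{s=1}^∞ [ent(α_s) + α_s] ≤ 0.03, where ent(α) = −α log₂ α − (1−α) log₂(1−α) is the binary entropy function. -/

import Mathlib

/-- The binary entropy function. -/
noncomputable def binEnt (α : ℝ) : ℝ :=
  -α * Real.logb 2 α - (1 - α) * Real.logb 2 (1 - α)

/-- The sequence α_s from the partial-coloring argument. -/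
noncomputable def alphaSeq (s : ℕ) : ℝ :=
  (2 * (1 - 1e-4/16) * Real.exp (-(2*(s:ℝ) - 1)^2 / (8 * 1e-2))
    + 2 * (1e-4/16) * Real.exp (-(2*(s:ℝ) - 1)^2 / 8)) * 2^(s+1)

lemma alpha_pos (s : ℕ) : 0 < alphaSeq s := by
  unfold alphaSeq
  have h1 := Real.exp_pos (-(2*(s:ℝ) - 1)^2 / (8 * 1e-2))
  have h2 := Real.exp_pos (-(2*(s:ℝ) - 1)^2 / 8)
  have h3 : (0:ℝ) < 2^(s+1) := by positivity
  nlinarith [h1, h2, h3]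

lemma alpha_one : alphaSeq 1 ≤ 1e-4 := by
  have he := Real.exp_one_gt_d9
  have h12 : (162754.79 : ℝ) ≤ Real.exp 12 := by
    have h0 : Real.exp 1 ^ (12:ℕ) = Real.exp 12 := by
      rw [← Real.exp_nat_mul]; norm_num
    have h1 : (2.7182818283:ℝ)^(12:ℕ) ≤ Real.exp 1 ^ (12:ℕ) :=
      pow_le_pow_left₀ (by norm_num) he.le 12
    rw [h0] at h1
    nlinarith [h1]
  have hX : Real.exp (-(12.5:ℝ)) ≤ 6.15e-6 := by
    have h1 : Real.exp (-(12.5:ℝ)) ≤ Real.exp (-12) := by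
      apply Real.exp_le_exp.2; norm_num
    have h2 : Real.exp (-(12:ℝ)) = (Real.exp 12)⁻¹ := by
      rw [Real.exp_neg]
    have h3 : (Real.exp 12)⁻¹ ≤ 6.15e-6 := by
      rw [inv_le_iff_one_le_mul₀ (by positivity)]
      nlinarith [h12]
    linarith
  have hY : Real.exp (-(2*(1:ℝ) - 1)^2 / 8) ≤ 1 := by
    rw [Real.exp_le_one_iff]; norm_num
  unfold alphaSeq
  push_cast
  have h1 : (-(2*(1:ℝ) - 1)^2 / (8 * 1e-2)) = -12.5 := by norm_num
  rw [h1]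
  nlinarith [hX, hY, Real.exp_pos (-(12.5:ℝ)), Real.exp_pos (-(2*(1:ℝ) - 1)^2 / 8)]

lemma alpha_ratio (s : ℕ) (hs : 1 ≤ s) :
    Real.exp 1 * alphaSeq (s+1) ≤ 2 * alphaSeq s := by
  have hs' : (1:ℝ) ≤ (s:ℝ) := by exact_mod_cast hs
  have hE1 : Real.exp 1 * Real.exp (-(2*((s:ℝ)+1) - 1)^2 / (8 * 1e-2))
      ≤ Real.exp (-(2*(s:ℝ) - 1)^2 / (8 * 1e-2)) := by
    rw [← Real.exp_add, Real.exp_le_exp]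
    have hq : (2*((s:ℝ)+1) - 1)^2 = (2*(s:ℝ)-1)^2 + 8*(s:ℝ) := by ring
    rw [hq]
    have : (0:ℝ) ≤ (2*(s:ℝ)-1)^2 := sq_nonneg _
    ring_nf
    nlinarith [this, hs']
  have hE2 : Real.exp 1 * Real.exp (-(2*((s:ℝ)+1) - 1)^2 / 8)
      ≤ Real.exp (-(2*(s:ℝ) - 1)^2 / 8) := by
    rw [← Real.exp_add, Real.exp_le_exp]
    have hq : (2*((s:ℝ)+1) - 1)^2 = (2*(s:ℝ)-1)^2 + 8*(s:ℝ) := by ring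
    rw [hq]
    have : (0:ℝ) ≤ (2*(s:ℝ)-1)^2 := sq_nonneg _
    linarith
  unfold alphaSeq
  push_cast
  have hpow : (2:ℝ)^(s+1+1) = 2 * 2^(s+1) := by ring
  rw [hpow]
  have hp : (0:ℝ) < 2^(s+1) := by positivity
  nlinarith [hE1, hE2, hp, Real.exp_pos 1,
    Real.exp_pos (-(2*((s:ℝ)+1) - 1)^2 / (8 * 1e-2)),
    Real.exp_pos (-(2*((s:ℝ)+1) - 1)^2 / 8)]


lemma alpha_decay (s : ℕ) : alphaSeq (s+1) ≤ 1e-4 * (2 / Real.exp 1)^s := by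
  induction s with
  | zero => simpa using alpha_one
  | succ n ih =>
    have h := alpha_ratio (n+1) (by omega)
    have he : (0:ℝ) < Real.exp 1 := Real.exp_pos 1
    have hstep : alphaSeq (n+2) ≤ (2/Real.exp 1) * alphaSeq (n+1) := by
      rw [div_mul_eq_mul_div, le_div_iff₀ he]
      nlinarith [h]
    calc alphaSeq (n+2) ≤ (2/Real.exp 1) * alphaSeq (n+1) := hstep
      _ ≤ (2/Real.exp 1) * (1e-4 * (2/Real.exp 1)^n) :=
          mul_le_mul_of_nonneg_left ih (by positivity)
      _ = 1e-4 * (2/Real.exp 1)^(n+1) := by ring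

lemma binEnt_le {x t : ℝ} (hx : 0 < x) (hxt : x ≤ t) (ht : t ≤ 1/2) :
    binEnt x + x ≤ (t * Real.log (1/t) + 2*t) / Real.log 2 + t := by
  have hx1 : x < 1 := by linarith
  have ht0 : 0 < t := lt_of_lt_of_le hx hxt
  have hlog2 : (0:ℝ) < Real.log 2 := Real.log_pos (by norm_num)
  have h1 : -((1-x) * Real.log (1-x)) ≤ x := by
    have ha : 0 < 1 - x := by linarith
    have hl := Real.log_le_sub_one_of_pos (inv_pos.2 ha)
    rw [Real.log_inv] at hl
    have h2 : (1-x)⁻¹ - 1 = x / (1-x) := by field_simp; ring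
    rw [h2] at hl
    calc -((1-x) * Real.log (1-x)) = (1-x) * (-Real.log (1-x)) := by ring
      _ ≤ (1-x) * (x / (1-x)) := mul_le_mul_of_nonneg_left hl ha.le
      _ = x := by field_simp
  have h2 : -(x * Real.log x) ≤ t * Real.log (1/t) + t := by
    have hlx : Real.log x = Real.log t + Real.log (x/t) := by
      rw [Real.log_div (ne_of_gt hx) (ne_of_gt ht0)]; ring
    have hlt : Real.log (1/t) = -Real.log t := by rw [one_div, Real.log_inv]
    have ha : Real.log (t/x) ≤ t/x - 1 := Real.log_le_sub_one_of_pos (by positivity)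
    have hb : Real.log (x/t) = -Real.log (t/x) := by
      rw [← Real.log_inv]; congr 1; field_simp
    have hlogt : Real.log t ≤ 0 := Real.log_nonpos ht0.le (by linarith)
    have hc : x * Real.log (t/x) ≤ t - x := by
      calc x * Real.log (t/x) ≤ x * (t/x - 1) := mul_le_mul_of_nonneg_left ha hx.le
        _ = t - x := by field_simp
    have hd : -(x * Real.log t) ≤ -(t * Real.log t) := by nlinarith [hlogt]
    rw [hlt]
    nlinarith [hc, hd, hlx, hb]
  have hbe : binEnt x = (-(x * Real.log x) + -((1-x)*Real.log (1-x))) / Real.log 2 := by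
    unfold binEnt
    rw [Real.logb, Real.logb]
    field_simp
    ring
  rw [hbe]
  have hmain : (-(x * Real.log x) + -((1-x)*Real.log (1-x))) / Real.log 2
      ≤ (t * Real.log (1/t) + 2*t) / Real.log 2 := by
    rw [div_le_div_iff_of_pos_right hlog2]
    linarith
  linarith

lemma term_le (s : ℕ) :
    binEnt (alphaSeq (s+1)) + alphaSeq (s+1)
      ≤ 0.002 * (2/Real.exp 1)^s + 0.00005 * ((s:ℝ) * (2/Real.exp 1)^s) := by
  set r := 2/Real.exp 1 with hrdef
  have he := Real.exp_one_gt_d9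
  have hr0 : (0:ℝ) < r := by rw [hrdef]; positivity
  have hr1 : r < 1 := by
    rw [hrdef, div_lt_one (Real.exp_pos 1)]; linarith
  have hR : (0:ℝ) < r^s := pow_pos hr0 s
  have hRle : r^s ≤ 1 := pow_le_one₀ hr0.le hr1.le
  have hdecay : alphaSeq (s+1) ≤ 1e-4 * r^s := alpha_decay s
  have ht1 : 1e-4 * r^s ≤ 1/2 := by nlinarith
  have hb := binEnt_le (alpha_pos (s+1)) hdecay ht1
  have hlog2 : (0:ℝ) < Real.log 2 := Real.log_pos (by norm_num)
  have hlogr : Real.log r = Real.log 2 - 1 := by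
    rw [hrdef, Real.log_div (by norm_num) (Real.exp_ne_zero 1), Real.log_exp]
  have hlt : Real.log (1/(1e-4 * r^s)) = -Real.log 1e-4 - s * (Real.log 2 - 1) := by
    rw [one_div, Real.log_inv, Real.log_mul (by norm_num) (ne_of_gt hR), Real.log_pow, hlogr]
    push_cast; ring
  have hL4 : -Real.log 1e-4 ≤ 14 * Real.log 2 := by
    have h1 : Real.log 1e-4 = -Real.log 1e4 := by
      rw [show (1e-4:ℝ) = (1e4)⁻¹ by norm_num, Real.log_inv]
    have h2 : Real.log 1e4 ≤ Real.log (2^14) := by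
      apply Real.log_le_log (by norm_num) (by norm_num)
    rw [Real.log_pow] at h2
    push_cast at h2
    linarith [h1, h2]
  have hl2a := Real.log_two_gt_d9
  have hl2b := Real.log_two_lt_d9
  have hsnn : (0:ℝ) ≤ (s:ℝ) := Nat.cast_nonneg s
  -- scalar inequality
  have hcoef : 1e-4 * (1 - Real.log 2) ≤ 0.00005 * Real.log 2 := by nlinarith
  have hscal : 1e-4 * (-Real.log 1e-4 - s * (Real.log 2 - 1)) + 2e-4
      ≤ (0.0019 + 0.00005*(s:ℝ)) * Real.log 2 := by
    nlinarith [mul_le_mul_of_nonneg_right hcoef hsnn]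
  have hmul := mul_le_mul_of_nonneg_right hscal hR.le
  have hdiv : (1e-4 * r^s * Real.log (1/(1e-4 * r^s)) + 2*(1e-4*r^s)) / Real.log 2
      ≤ 0.0019 * r^s + 0.00005 * ((s:ℝ) * r^s) := by
    rw [div_le_iff₀ hlog2, hlt]
    nlinarith [hmul]
  calc binEnt (alphaSeq (s+1)) + alphaSeq (s+1)
      ≤ (1e-4 * r^s * Real.log (1/(1e-4 * r^s)) + 2*(1e-4*r^s)) / Real.log 2
          + 1e-4 * r^s := hb
    _ ≤ (0.0019 * r^s + 0.00005 * ((s:ℝ) * r^s)) + 1e-4 * r^s := by linarith [hdiv]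
    _ ≤ 0.002 * r^s + 0.00005 * ((s:ℝ) * r^s) := by nlinarith

theorem stmt_15 :
    alphaSeq 1 ≤ 1e-4 ∧
    (∀ s : ℕ, 1 ≤ s → Real.exp 1 / 2 ≤ alphaSeq s / alphaSeq (s+1)) ∧
    (∑' s : ℕ, (binEnt (alphaSeq (s+1)) + alphaSeq (s+1))) ≤ 0.03 := by
  refine ⟨alpha_one, fun s hs => ?_, ?_⟩
  · rw [le_div_iff₀ (alpha_pos (s+1))]
    have := alpha_ratio s hs
    nlinarith [alpha_pos s]
  · set r := 2/Real.exp 1 with hrdef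
    have he := Real.exp_one_gt_d9
    have hr0 : (0:ℝ) ≤ r := by rw [hrdef]; positivity
    have hr1 : r < 1 := by
      rw [hrdef, div_lt_one (Real.exp_pos 1)]; linarith
    have hnorm : ‖r‖ < 1 := by rwa [Real.norm_eq_abs, abs_of_nonneg hr0]
    have S1 : Summable (fun s:ℕ => r^s) := summable_geometric_of_lt_one hr0 hr1
    have S2 : Summable (fun s:ℕ => (s:ℝ) * r^s) :=
      (hasSum_coe_mul_geometric_of_norm_lt_one hnorm).summable
    have Sg : Summable (fun s:ℕ => 0.002*r^s + 0.00005*((s:ℝ)*r^s)) :=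
      (S1.mul_left _).add (S2.mul_left _)
    have hle : ∀ s:ℕ, binEnt (alphaSeq (s+1)) + alphaSeq (s+1)
        ≤ 0.002*r^s + 0.00005*((s:ℝ)*r^s) := term_le
    have hnn : ∀ s:ℕ, 0 ≤ binEnt (alphaSeq (s+1)) + alphaSeq (s+1) := by
      intro s
      have hx := alpha_pos (s+1)
      have hx1 : alphaSeq (s+1) ≤ 1e-4 := by
        have h := alpha_decay s
        nlinarith [pow_le_one₀ hr0 hr1.le (n := s)]
      have h1 : Real.logb 2 (alphaSeq (s+1)) ≤ 0 :=
        Real.logb_nonpos one_lt_two hx.le (by linarith)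
      have h2 : Real.logb 2 (1 - alphaSeq (s+1)) ≤ 0 :=
        Real.logb_nonpos one_lt_two (by linarith) (by linarith)
      unfold binEnt
      nlinarith [mul_nonpos_of_nonneg_of_nonpos hx.le h1,
        mul_nonpos_of_nonneg_of_nonpos (by linarith : (0:ℝ) ≤ 1 - alphaSeq (s+1)) h2]
    have Sf : Summable (fun s:ℕ => binEnt (alphaSeq (s+1)) + alphaSeq (s+1)) :=
      Summable.of_nonneg_of_le hnn hle Sg
    have htsum := Summable.tsum_le_tsum hle Sf Sg
    have hval : ∑' s:ℕ, (0.002*r^s + 0.00005*((s:ℝ)*r^s))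
        = 0.002*(1-r)⁻¹ + 0.00005*(r/(1-r)^2) := by
      rw [Summable.tsum_add (S1.mul_left _) (S2.mul_left _), tsum_mul_left, tsum_mul_left,
        tsum_geometric_of_lt_one hr0 hr1, tsum_coe_mul_geometric_of_norm_lt_one hnorm]
    have hrb : r ≤ 0.7358 := by
      rw [hrdef, div_le_iff₀ (Real.exp_pos 1)]; nlinarith [he]
    have hrpos : (0:ℝ) ≤ r := hr0
    have hi : (1-r)⁻¹ ≤ (0.2642:ℝ)⁻¹ := by
      apply inv_anti₀ (by norm_num)
      linarith
    have hsq : (0.2642:ℝ)^2 ≤ (1-r)^2 := by nlinarith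
    have h2b : r/(1-r)^2 ≤ 0.7358/(0.2642:ℝ)^2 := by
      apply div_le_div₀ (by norm_num) hrb (by norm_num) hsq
    have hfin : 0.002*(1-r)⁻¹ + 0.00005*(r/(1-r)^2)
        ≤ 0.002*(0.2642:ℝ)⁻¹ + 0.00005*(0.7358/(0.2642:ℝ)^2) := by
      nlinarith [hi, h2b]
    rw [hval] at htsum
    have : (0.002*(0.2642:ℝ)⁻¹ + 0.00005*(0.7358/(0.2642:ℝ)^2)) ≤ 0.03 := by norm_num
    linarith
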